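/- Let D₁ be an almost regular degree sequence on n vertices with all entries equal to k or k + 1. If k + 1 ≤ n², then the tripartite degree sequence D = (D₁, D₁, D₁) has a tripartite 3-uniform hypergraph realization H = (A, B, C, E). -/

import Mathlib

open Fin.NatCast

/-- A tripartite 3-uniform hypergraph degree sequence `(D₁, D₂, D₃)` is graphic: there exists a
tripartite 3-uniform hypergraph, given by its set of hyperedges `E ⊆ A × B × C` (each hyperedge
has exactly one vertex in each class, no repeated hyperedges), whose degrees on the three
vertex classes are exactly `D₁`, `D₂`, `D₃`. -/
def TripartiteGraphic {n₁ n₂ n₃ : ℕ} (D₁ : Fin n₁ → ℕ) (D₂ : Fin n₂ → ℕ)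
    (D₃ : Fin n₃ → ℕ) : Prop :=
  ∃ E : Finset (Fin n₁ × Fin n₂ × Fin n₃),
    (∀ a, (E.filter fun e => e.1 = a).card = D₁ a) ∧
    (∀ b, (E.filter fun e => e.2.1 = b).card = D₂ b) ∧
    (∀ c, (E.filter fun e => e.2.2 = c).card = D₃ c)

/-- Let `D₁` be an almost regular degree sequence on `n` vertices with all entries equal to
`k` or `k + 1`. If `k + 1 ≤ n²`, then the tripartite degree sequence `(D₁, D₁, D₁)` has a
tripartite 3-uniform hypergraph realization. -/
theorem statement9 {n : ℕ} (k : ℕ) (D₁ : Fin n → ℕ)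
    (h : ∀ i, D₁ i = k ∨ D₁ i = k + 1) (hk : k + 1 ≤ n ^ 2) :
    TripartiteGraphic D₁ D₁ D₁ := by
  rcases n with _ | m
  · exact absurd hk (by simp)
  classical
  have hmul : k + 1 ≤ (m + 1) * (m + 1) := by rw [← pow_two]; exact hk
  set f : ℕ × Fin (m+1) → Fin (m+1) × Fin (m+1) × Fin (m+1) :=
    fun p => (p.2, p.2 + (↑(p.1 + 1) : Fin (m+1)), p.2 + (↑((p.1 + 1) / (m+1)) : Fin (m+1)))
    with hf
  have hdivlt : ∀ j, j < k → (j + 1) / (m+1) < m+1 := fun j hj =>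
    (Nat.div_lt_iff_lt_mul (Nat.succ_pos m)).mpr (lt_of_lt_of_le (Nat.succ_lt_succ hj) hmul)
  have key : ∀ j j' : ℕ, j < k → j' < k → (↑(j+1) : Fin (m+1)) = ↑(j'+1) →
      (↑((j+1)/(m+1)) : Fin (m+1)) = ↑((j'+1)/(m+1)) → j = j' := by
    intro j j' hj hj' h1 h2
    have e1 : (j+1) % (m+1) = (j'+1) % (m+1) := by
      simpa only [Fin.val_natCast] using congrArg Fin.val h1
    have e2 : (j+1) / (m+1) = (j'+1) / (m+1) := by
      have := congrArg Fin.val h2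
      simp only [Fin.val_natCast] at this
      rwa [Nat.mod_eq_of_lt (hdivlt j hj), Nat.mod_eq_of_lt (hdivlt j' hj')] at this
    have e3 : j + 1 = j' + 1 := by
      conv_lhs => rw [← Nat.div_add_mod (j+1) (m+1)]
      rw [e1, e2, Nat.div_add_mod]
    omega
  set T : Finset (Fin (m+1)) := Finset.univ.filter (fun i => D₁ i = k + 1) with hTdef
  have hmemT : ∀ t : Fin (m+1), t ∈ T ↔ D₁ t = k + 1 := by
    intro t; simp [hTdef]
  -- disjointness
  have hdisj : Disjoint ((Finset.range k ×ˢ (Finset.univ : Finset (Fin (m+1)))).image f)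
      (T.image (fun t => (t,t,t))) := by
    rw [Finset.disjoint_left]
    rintro e he he'
    simp only [Finset.mem_image, Finset.mem_product, Finset.mem_range, Finset.mem_univ,
      and_true] at he he'
    obtain ⟨⟨j, i⟩, hj, rfl⟩ := he
    obtain ⟨t, ht, heq⟩ := he'
    simp only [hf, Prod.mk.injEq] at heq
    obtain ⟨h0, h1, h2⟩ := heq
    rw [h0] at h1 h2
    have z1 : (↑(j+1) : Fin (m+1)) = 0 := add_eq_left.mp h1.symm
    have z2 : (↑((j+1)/(m+1)) : Fin (m+1)) = 0 := add_eq_left.mp h2.symm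
    have v1 : (j+1) % (m+1) = 0 := by
      simpa only [Fin.val_natCast, Fin.val_zero] using congrArg Fin.val z1
    have v2 : (j+1) / (m+1) = 0 := by
      have := congrArg Fin.val z2
      simp only [Fin.val_natCast, Fin.val_zero] at this
      rwa [Nat.mod_eq_of_lt (hdivlt j hj)] at this
    have hlt : j + 1 < m + 1 := (Nat.div_eq_zero_iff.mp v2).resolve_left (Nat.succ_ne_zero m)
    rw [Nat.mod_eq_of_lt hlt] at v1
    omega
  -- card of the filtered image part
  have himg_card : ∀ (P : Fin (m+1) × Fin (m+1) × Fin (m+1) → Prop) [DecidablePred P]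
      (g : ℕ → Fin (m+1)),
      (∀ j i, j < k → (P (f (j, i)) ↔ i = g j)) →
      ((((Finset.range k ×ˢ (Finset.univ : Finset (Fin (m+1)))).image f).filter P).card = k) := by
    intro P _ g hg
    have hset : ((Finset.range k ×ˢ (Finset.univ : Finset (Fin (m+1)))).image f).filter P
        = (Finset.range k).image (fun j => f (j, g j)) := by
      ext e
      simp only [Finset.mem_filter, Finset.mem_image, Finset.mem_product, Finset.mem_range,
        Finset.mem_univ, and_true]
      constructor
      · rintro ⟨⟨⟨j, i⟩, hj, rfl⟩, hP⟩
        exact ⟨j, hj, by rw [← (hg j i hj).mp hP]⟩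
      · rintro ⟨j, hj, rfl⟩
        exact ⟨⟨⟨j, g j⟩, hj, rfl⟩, (hg j (g j) hj).mpr rfl⟩
    rw [hset, Finset.card_image_of_injOn, Finset.card_range]
    intro j hj j' hj' he
    simp only [Finset.coe_range, Set.mem_Iio] at hj hj'
    have h0 : g j = g j' := congrArg Prod.fst he
    have h1 : g j + (↑(j+1) : Fin (m+1)) = g j' + ↑(j'+1) := congrArg (fun e => e.2.1) he
    have h2 : g j + (↑((j+1)/(m+1)) : Fin (m+1)) = g j' + ↑((j'+1)/(m+1)) :=
      congrArg (fun e => e.2.2) he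
    rw [h0] at h1 h2
    exact key j j' hj hj' (add_left_cancel h1) (add_left_cancel h2)
  -- card of the filtered diagonal part
  have hT_card : ∀ (P : Fin (m+1) × Fin (m+1) × Fin (m+1) → Prop) [DecidablePred P]
      (v : Fin (m+1)), (∀ t : Fin (m+1), P (t,t,t) ↔ t = v) →
      ((T.image fun t => (t,t,t)).filter P).card = if D₁ v = k + 1 then 1 else 0 := by
    intro P _ v hv
    have hset : (T.image fun t => (t,t,t)).filter P
        = if D₁ v = k+1 then ({(v,v,v)} : Finset _) else ∅ := by
      ext e
      simp only [Finset.mem_filter, Finset.mem_image]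
      constructor
      · rintro ⟨⟨t, ht, rfl⟩, hP⟩
        have : t = v := (hv t).mp hP
        subst this
        rw [hmemT] at ht
        simp [ht]
      · intro he
        split at he
        · next hDv =>
          simp only [Finset.mem_singleton] at he
          subst he
          exact ⟨⟨v, (hmemT v).mpr hDv, rfl⟩, (hv v).mpr rfl⟩
        · simp at he
    rw [hset]
    split <;> simp
  refine ⟨(Finset.range k ×ˢ (Finset.univ : Finset (Fin (m+1)))).image f
      ∪ T.image (fun t => (t,t,t)), ?_, ?_, ?_⟩
  · intro a
    rw [Finset.filter_union,
      Finset.card_union_of_disjoint (Finset.disjoint_filter_filter hdisj),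
      himg_card _ (fun _ => a) (by intro j i hj; simp [hf]),
      hT_card _ a (by intro t; simp)]
    rcases h a with hv | hv <;> simp [hv]
  · intro b
    rw [Finset.filter_union,
      Finset.card_union_of_disjoint (Finset.disjoint_filter_filter hdisj),
      himg_card _ (fun j => b - ↑(j+1)) (by
        intro j i hj
        simp only [hf]
        constructor
        · intro hh; exact eq_sub_of_add_eq hh
        · intro hh; subst hh; exact sub_add_cancel b _),
      hT_card _ b (by intro t; simp)]
    rcases h b with hv | hv <;> simp [hv]
  · intro c
    rw [Finset.filter_union,
      Finset.card_union_of_disjoint (Finset.disjoint_filter_filter hdisj),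
      himg_card _ (fun j => c - ↑((j+1)/(m+1))) (by
        intro j i hj
        simp only [hf]
        constructor
        · intro hh; exact eq_sub_of_add_eq hh
        · intro hh; subst hh; exact sub_add_cancel c _),
      hT_card _ c (by intro t; simp)]
    rcases h c with hv | hv <;> simp [hv]
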